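/- Let G be a group acting on a Polish space X that is σ-compact, second countable, and has no isolated points, via an action α: G × X → X such that every orbit is dense in X and α(g,·) is continuous for each fixed g ∈ G. Then for every meagre set M ⊆ X there is a closed nowhere dense set C ⊆ X and a countable set Y ⊆ G such that M ⊆ α(Y, C) = {α(y,c) : y ∈ Y, c ∈ C}. -/

import Mathlib

open Set Topology Metric

section Aux

variable {G X : Type*} [Group G] [TopologicalSpace X]

lemma aux_nwd_mono {s t : Set X} (h : s ⊆ t) (ht : IsNowhereDense t) : IsNowhereDense s := by
  have hsub : interior (closure s) ⊆ interior (closure t) := interior_mono (closure_mono h)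
  rw [IsNowhereDense] at ht ⊢
  exact eq_empty_of_subset_empty (ht ▸ hsub)

lemma aux_nwd_union {s t : Set X} (hs : IsNowhereDense s) (ht : IsNowhereDense t) :
    IsNowhereDense (s ∪ t) := by
  obtain ⟨hso, hsd⟩ := isClosed_isNowhereDense_iff_compl.mp ⟨isClosed_closure, hs.closure⟩
  obtain ⟨hto, htd⟩ := isClosed_isNowhereDense_iff_compl.mp ⟨isClosed_closure, ht.closure⟩
  have : IsClosed (closure s ∪ closure t) ∧ IsNowhereDense (closure s ∪ closure t) := by
    refine isClosed_isNowhereDense_iff_compl.mpr ?_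
    rw [Set.compl_union]
    exact ⟨hso.inter hto, hsd.inter_of_isOpen_right htd hto⟩
  exact aux_nwd_mono (Set.union_subset_union subset_closure subset_closure) this.2

lemma aux_nwd_isMeagre {s : Set X} (hs : IsNowhereDense s) : IsMeagre s :=
  isMeagre_iff_countable_union_isNowhereDense.mpr
    ⟨{s}, by simpa using hs, countable_singleton _, by simp⟩

lemma aux_meagre_union {s t : Set X} (hs : IsMeagre s) (ht : IsMeagre t) :
    IsMeagre (s ∪ t) := by
  rw [IsMeagre, compl_union]; exact Filter.inter_mem hs ht

/-- The homeomorphism of `X` induced by the action of `g`. -/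
def actHomeo (α : G → X → X) (hone : ∀ x, α 1 x = x)
    (hmul : ∀ g h x, α (g * h) x = α g (α h x)) (hcont : ∀ g, Continuous (α g)) (g : G) :
    X ≃ₜ X where
  toFun := α g
  invFun := α g⁻¹
  left_inv := fun x => by rw [← hmul, inv_mul_cancel, hone]
  right_inv := fun x => by rw [← hmul, mul_inv_cancel, hone]
  continuous_toFun := hcont g
  continuous_invFun := hcont g⁻¹

lemma aux_nwd_image (α : G → X → X) (hone : ∀ x, α 1 x = x)
    (hmul : ∀ g h x, α (g * h) x = α g (α h x)) (hcont : ∀ g, Continuous (α g)) (g : G)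
    {s : Set X} (hs : IsNowhereDense s) : IsNowhereDense (α g '' s) := by
  let h := actHomeo α hone hmul hcont g
  have himg : α g '' s = h '' s := rfl
  rw [IsNowhereDense, himg, ← h.image_closure, ← h.image_interior, hs, image_empty]

end Aux

/-- Covering lemma: a compact nowhere dense set can be covered by finitely many
translates of a closed nowhere dense subset of any given ball. -/
lemma aux_cover_compact {G X : Type*} [Group G] [MetricSpace X]
    (α : G → X → X) (hone : ∀ x, α 1 x = x)
    (hmul : ∀ g h x, α (g * h) x = α g (α h x)) (hcont : ∀ g, Continuous (α g))
    (horb : ∀ x : X, Dense (Set.range fun g => α g x))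
    {K : Set X} (hK : IsCompact K) (hKnwd : IsNowhereDense K)
    (z : X) {r : ℝ} (hr : 0 < r) :
    ∃ (C0 : Set X) (Y0 : Set G), Y0.Countable ∧ IsClosed C0 ∧ IsNowhereDense C0 ∧
      C0 ⊆ Metric.ball z r ∧ K ⊆ ⋃ y ∈ Y0, α y '' C0 := by
  -- for each point, find a group element moving it into the ball, and a radius witnessing
  -- continuity
  have hstep : ∀ x : X, ∃ (g : G) (δ : ℝ), 0 < δ ∧
      α g '' Metric.closedBall x (δ / 2) ⊆ Metric.ball z r := by
    intro x
    obtain ⟨_, ⟨g, rfl⟩, hgx⟩ := (horb x).exists_mem_open Metric.isOpen_ball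
      ⟨z, Metric.mem_ball_self hr⟩
    have hpre : IsOpen ((α g) ⁻¹' Metric.ball z r) := (hcont g).isOpen_preimage _ Metric.isOpen_ball
    obtain ⟨δ, hδ, hball⟩ := Metric.isOpen_iff.mp hpre x hgx
    refine ⟨g, δ, hδ, ?_⟩
    rintro _ ⟨y, hy, rfl⟩
    exact hball (lt_of_le_of_lt (Metric.mem_closedBall.mp hy) (by linarith))
  choose g δ hδ hgδ using hstep
  obtain ⟨t, -, htcov⟩ := hK.elim_nhds_subcover (fun x => Metric.ball x (δ x / 2))
    (fun x _ => Metric.ball_mem_nhds x (by have := hδ x; linarith))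
  refine ⟨⋃ x ∈ t, α (g x) '' (K ∩ Metric.closedBall x (δ x / 2)),
    (fun x => (g x)⁻¹) '' ↑t, (t.countable_toSet).image _, ?_, ?_, ?_, ?_⟩
  · -- closed
    refine Set.Finite.isClosed_biUnion t.finite_toSet (fun x _ => ?_)
    exact ((hK.inter_right Metric.isClosed_closedBall).image (hcont _)).isClosed
  · -- nowhere dense
    classical
    clear htcov
    induction t using Finset.induction_on with
    | empty => simp only [Finset.notMem_empty, iUnion_of_empty, iUnion_empty]; exact isNowhereDense_empty
    | insert _ _ hnotmem ih =>
      rw [Finset.set_biUnion_insert]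
      exact aux_nwd_union
        (aux_nwd_image α hone hmul hcont _ (aux_nwd_mono inter_subset_left hKnwd)) ih
  · -- contained in the ball
    rintro y hy
    simp only [mem_iUnion] at hy
    obtain ⟨x, -, hy⟩ := hy
    exact hgδ x (Set.image_mono inter_subset_right hy)
  · -- covers K
    intro k hk
    obtain ⟨x, hxt, hkx⟩ := Set.mem_iUnion₂.mp (htcov hk)
    have hkC : α (g x) k ∈ ⋃ x ∈ t, α (g x) '' (K ∩ Metric.closedBall x (δ x / 2)) := by
      refine Set.mem_biUnion hxt ⟨k, ⟨hk, Metric.ball_subset_closedBall hkx⟩, rfl⟩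
    refine Set.mem_biUnion (Set.mem_image_of_mem _ hxt) ⟨α (g x) k, hkC, ?_⟩
    rw [← hmul, inv_mul_cancel, hone]

/-- If a group `G` acts on a σ-compact, second countable Polish space `X`
without isolated points, with all orbits dense and each `α g` continuous, then every
meagre set `M ⊆ X` is covered by countably many translates of a single closed nowhere
dense set. -/
theorem covering_meagre_by_translates_of_closed_nwd
    {G X : Type*} [Group G] [TopologicalSpace X] [PolishSpace X]
    [SigmaCompactSpace X] [SecondCountableTopology X]
    (hni : ∀ x : X, ¬ IsOpen ({x} : Set X))
    (α : G → X → X)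
    (hone : ∀ x, α 1 x = x)
    (hmul : ∀ g h x, α (g * h) x = α g (α h x))
    (hcont : ∀ g, Continuous (α g))
    (horb : ∀ x : X, Dense (Set.range fun g => α g x))
    (M : Set X) (hM : IsMeagre M) :
    ∃ (C : Set X) (Y : Set G), IsClosed C ∧ IsNowhereDense C ∧ Y.Countable ∧
      M ⊆ ⋃ y ∈ Y, α y '' C := by
  rcases isEmpty_or_nonempty X with hX | hX
  · exact ⟨∅, ∅, isClosed_empty, isNowhereDense_empty, countable_empty,
      by simp [Set.eq_empty_of_isEmpty M]⟩
  obtain ⟨z⟩ := hX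
  letI := TopologicalSpace.upgradeIsCompletelyMetrizable X
  -- decompose M into countably many compact nowhere dense pieces
  obtain ⟨S, hSnwd, hScount, hSsub⟩ := isMeagre_iff_countable_union_isNowhereDense.mp hM
  have hS'count : (insert (∅ : Set X) S).Countable := hScount.insert _
  obtain ⟨f, hf⟩ := hS'count.exists_eq_range ⟨∅, mem_insert _ _⟩
  have hfnwd : ∀ n, IsNowhereDense (f n) := by
    intro n
    have : f n ∈ insert (∅ : Set X) S := hf ▸ mem_range_self n
    rcases this with h | h
    · rw [h]; exact isNowhereDense_empty
    · exact hSnwd _ h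
  have hMf : M ⊆ ⋃ n, f n := by
    intro x hx
    obtain ⟨s, hsS, hxs⟩ := hSsub hx
    have : s ∈ Set.range f := hf ▸ mem_insert_of_mem _ hsS
    obtain ⟨n, rfl⟩ := this
    exact mem_iUnion_of_mem n hxs
  let e : ℕ ≃ ℕ × ℕ := (Denumerable.eqv (ℕ × ℕ)).symm
  set K : ℕ → Set X := fun n => closure (f (e n).1) ∩ compactCovering X (e n).2 with hKdef
  have hKcomp : ∀ n, IsCompact (K n) :=
    fun n => (isCompact_compactCovering X _).inter_left isClosed_closure
  have hKnwd : ∀ n, IsNowhereDense (K n) :=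
    fun n => aux_nwd_mono inter_subset_left (hfnwd _).closure
  have hMK : M ⊆ ⋃ n, K n := by
    intro x hx
    obtain ⟨i, hxi⟩ := mem_iUnion.mp (hMf hx)
    have hxc : x ∈ ⋃ m, compactCovering X m := by
      rw [iUnion_compactCovering]; trivial
    obtain ⟨m, hxm⟩ := mem_iUnion.mp hxc
    refine mem_iUnion_of_mem (e.symm (i, m)) ?_
    have he : e (e.symm (i, m)) = (i, m) := e.apply_symm_apply _
    rw [hKdef]
    simp only [he]
    exact ⟨subset_closure hxi, hxm⟩
  -- apply the covering lemma to each piece, pushing it into a small ball around z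
  have hcover : ∀ n : ℕ, ∃ (C0 : Set X) (Y0 : Set G), Y0.Countable ∧ IsClosed C0 ∧
      IsNowhereDense C0 ∧ C0 ⊆ Metric.ball z ((1 / 2 : ℝ) ^ n) ∧
      K n ⊆ ⋃ y ∈ Y0, α y '' C0 :=
    fun n => aux_cover_compact α hone hmul hcont horb (hKcomp n) (hKnwd n) z
      (by positivity)
  choose C0 Y0 hY0count hC0closed hC0nwd hC0ball hC0cov using hcover
  refine ⟨closure (⋃ n, C0 n), ⋃ n, Y0 n, isClosed_closure, ?_, countable_iUnion hY0count, ?_⟩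
  · -- nowhere dense
    have hsub : closure (⋃ n, C0 n) ⊆ insert z (⋃ n, C0 n) := by
      intro x hx
      by_cases hxz : x = z
      · exact hxz ▸ mem_insert _ _
      have hd : 0 < dist x z := dist_pos.mpr hxz
      obtain ⟨N, hN⟩ := exists_pow_lt_of_lt_one hd (by norm_num : (1 / 2 : ℝ) < 1)
      have hsplit : (⋃ n, C0 n) ⊆ (⋃ n ∈ {n : ℕ | n < N}, C0 n) ∪
          (⋃ n ∈ {n : ℕ | N ≤ n}, C0 n) := by
        intro y hy
        obtain ⟨n, hyn⟩ := mem_iUnion.mp hy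
        rcases lt_or_ge n N with h | h
        · exact Or.inl (mem_biUnion h hyn)
        · exact Or.inr (mem_biUnion h hyn)
      have hx' : x ∈ closure ((⋃ n ∈ {n : ℕ | n < N}, C0 n) ∪
          (⋃ n ∈ {n : ℕ | N ≤ n}, C0 n)) := closure_mono hsplit hx
      rw [closure_union] at hx'
      rcases hx' with hx' | hx'
      · have hcl : IsClosed (⋃ n ∈ {n : ℕ | n < N}, C0 n) :=
          (Set.finite_lt_nat N).isClosed_biUnion (fun n _ => hC0closed n)
        have : x ∈ ⋃ n ∈ {n : ℕ | n < N}, C0 n := hcl.closure_subset hx'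
        obtain ⟨n, -, hn⟩ := mem_iUnion₂.mp this
        exact mem_insert_of_mem _ (mem_iUnion_of_mem n hn)
      · exfalso
        have hε : 0 < dist x z - (1 / 2 : ℝ) ^ N := by linarith
        obtain ⟨y, hyB, hxy⟩ := Metric.mem_closure_iff.mp hx' _ hε
        obtain ⟨n, hnN, hyn⟩ := mem_iUnion₂.mp hyB
        have hyz : dist y z < (1 / 2 : ℝ) ^ n := Metric.mem_ball.mp (hC0ball n hyn)
        have hpow : (1 / 2 : ℝ) ^ n ≤ (1 / 2 : ℝ) ^ N :=
          pow_le_pow_of_le_one (by norm_num) (by norm_num) hnN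
        have := dist_triangle x y z
        linarith
    -- hence the closure is meagre, and being closed it is nowhere dense
    have hzm : IsMeagre ({z} : Set X) := by
      refine aux_nwd_isMeagre ?_
      rw [IsClosed.isNowhereDense_iff isClosed_singleton]
      by_contra h
      have hne : (interior ({z} : Set X)).Nonempty := nonempty_iff_ne_empty.mpr h
      have : interior ({z} : Set X) = {z} :=
        (Set.subset_singleton_iff_eq.mp interior_subset).resolve_left
          (nonempty_iff_ne_empty.mp hne)
      exact hni z (this ▸ isOpen_interior)
    have hmeag : IsMeagre (closure (⋃ n, C0 n)) := by
      have h1 : IsMeagre (insert z (⋃ n, C0 n)) := by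
        rw [insert_eq]
        exact aux_meagre_union hzm (isMeagre_iUnion fun n => aux_nwd_isMeagre (hC0nwd n))
      exact h1.mono hsub
    have hdense : Dense (closure (⋃ n, C0 n))ᶜ := dense_of_mem_residual hmeag
    rw [IsClosed.isNowhereDense_iff isClosed_closure]
    by_contra h
    obtain ⟨x, hx⟩ := nonempty_iff_ne_empty.mpr h
    obtain ⟨y, hyc, hyi⟩ := hdense.exists_mem_open isOpen_interior ⟨x, hx⟩
    exact hyc (interior_subset hyi)
  · -- covering
    intro x hx
    obtain ⟨n, hxn⟩ := mem_iUnion.mp (hMK hx)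
    obtain ⟨y, hyY, hxy⟩ := mem_iUnion₂.mp (hC0cov n hxn)
    refine mem_biUnion (mem_iUnion_of_mem n hyY) ?_
    exact Set.image_mono ((subset_iUnion C0 n).trans subset_closure) hxy
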